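/- Let B_0, …, B_{m−1} be simple N×N real (0,1)-matrices defining a deterministic finite automaton, and for k ∈ ℕ let P_k = m^{−k}·#{ words (ℓ₁,…,ℓ_k) ∈ {0,…,m−1}^k that are not reset words }. Let W = { w ∈ ℝᴺ : ∑_{i=1}^N w_i = 0 } and A_i = B_i|_W. Then: (1) the limit p = lim_{k→∞} P_k^{1/k} exists and equals ρ₂(A_0, …, A_{m−1})², the square of the L_2-spectral radius of the restrictions to W; and (2) the automaton admits a reset word if and only if p < 1. -/

import Mathlib

open MeasureTheory Metric Filter Set Pointwise

/-- A matrix is simple if every column contains exactly one entry `1` and all other entries `0`. -/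
def IsSimple {I : Type*} (T : Matrix I I ℝ) : Prop :=
  ∀ b, ∃ a, T a b = 1 ∧ ∀ a', a' ≠ a → T a' b = 0

/-- The matrix `T` has a row all of whose entries equal `1` (a reset-word product). -/
def hasOnesRow {I : Type*} (T : Matrix I I ℝ) : Prop := ∃ a, ∀ b, T a b = 1

/-- The subspace `W = { w : ∑ i, w i = 0 }`. -/
noncomputable def Wsub (I : Type*) [Fintype I] : Submodule ℝ (I → ℝ) :=
  LinearMap.ker ((∑ i : I, LinearMap.proj i) : (I → ℝ) →ₗ[ℝ] ℝ)

/-- The operator norm of the restriction of `T` to the subspace `U` (for `U` invariant under `T`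
this is the norm of `T|_U`). -/
noncomputable def opNormOn {I : Type*} [Fintype I] (U : Submodule ℝ (I → ℝ))
    (T : Matrix I I ℝ) : ℝ :=
  sSup {c : ℝ | ∃ u ∈ U, ‖u‖ ≤ 1 ∧ c = ‖T.mulVec u‖}

/-- The `L_p`-spectral radius of the family `A` of matrices restricted to the subspace `U`:
`ρ_p = lim_k ( m^{-k} ∑_{words w of length k} ‖(A_{w₁}⋯A_{w_k})|_U‖^p )^{1/(pk)}`. -/
noncomputable def lpRadiusOn {I ι : Type*} [Fintype I] [DecidableEq I] [Fintype ι]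
    (U : Submodule ℝ (I → ℝ)) (A : ι → Matrix I I ℝ) (p : ℝ) : ℝ :=
  limUnder Filter.atTop fun k : ℕ =>
    (((Fintype.card ι : ℝ) ^ k)⁻¹ *
      ∑ w : Fin k → ι, opNormOn U ((List.ofFn fun i => A (w i)).prod) ^ p) ^ (1 / (p * k))


open Topology

section helpers

variable {N : ℕ}

lemma isSimple_one (hN : 0 < N) : IsSimple (1 : Matrix (Fin N) (Fin N) ℝ) := by
  intro b
  exact ⟨b, by simp [Matrix.one_apply], fun a' h => by simp [Matrix.one_apply, h]⟩

lemma colsum {T : Matrix (Fin N) (Fin N) ℝ} (hT : IsSimple T) (b : Fin N) :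
    ∑ a, T a b = 1 := by
  obtain ⟨a, ha1, ha0⟩ := hT b
  rw [Finset.sum_eq_single a (fun a' _ h => ha0 a' h) (by simp)]
  exact ha1

lemma isSimple_mul {T1 T2 : Matrix (Fin N) (Fin N) ℝ} (h1 : IsSimple T1)
    (h2 : IsSimple T2) : IsSimple (T1 * T2) := by
  intro b
  obtain ⟨c, hc1, hc0⟩ := h2 b
  obtain ⟨a, ha1, ha0⟩ := h1 c
  have key : ∀ a', (T1 * T2) a' b = T1 a' c := by
    intro a'
    rw [Matrix.mul_apply, Finset.sum_eq_single c (fun c' _ h => by rw [hc0 c' h, mul_zero])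
      (by simp), hc1, mul_one]
  exact ⟨a, by rw [key, ha1], fun a' h => by rw [key, ha0 a' h]⟩

lemma isSimple_listProd (hN : 0 < N) (l : List (Matrix (Fin N) (Fin N) ℝ))
    (hl : ∀ T ∈ l, IsSimple T) : IsSimple l.prod := by
  induction l with
  | nil => simpa using isSimple_one hN
  | cons T l ih =>
    rw [List.prod_cons]
    exact isSimple_mul (hl T (by simp)) (ih fun T' h => hl T' (List.mem_cons_of_mem _ h))

lemma hasOnesRow_mul_left {T1 T2 : Matrix (Fin N) (Fin N) ℝ} (h2 : IsSimple T2)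
    (h : hasOnesRow T1) : hasOnesRow (T1 * T2) := by
  obtain ⟨a, ha⟩ := h
  refine ⟨a, fun b => ?_⟩
  rw [Matrix.mul_apply]
  simp only [ha, one_mul]
  exact colsum h2 b

lemma hasOnesRow_mul_right {T1 T2 : Matrix (Fin N) (Fin N) ℝ} (h1 : IsSimple T1)
    (h2 : IsSimple T2) (h : hasOnesRow T2) : hasOnesRow (T1 * T2) := by
  obtain ⟨a, ha⟩ := h
  -- for a' ≠ a, row a' of T2 is zero
  have hrow : ∀ a' b, a' ≠ a → T2 a' b = 0 := by
    intro a' b hne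
    obtain ⟨c, hc1, hc0⟩ := h2 b
    have : a = c := by
      by_contra hac
      exact one_ne_zero (ha b ▸ hc0 a hac)
    exact hc0 a' (this ▸ hne)
  obtain ⟨r, hr1, _⟩ := h1 a
  refine ⟨r, fun b => ?_⟩
  rw [Matrix.mul_apply, Finset.sum_eq_single a
    (fun c _ h => by rw [hrow c b h, mul_zero]) (by simp), ha b, mul_one, hr1]

end helpers

section D
variable {N : ℕ}

lemma mem_Wsub {u : Fin N → ℝ} : u ∈ Wsub (Fin N) ↔ ∑ i, u i = 0 := by
  simp [Wsub, LinearMap.mem_ker, LinearMap.proj_apply]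

lemma simple_abs_le {T : Matrix (Fin N) (Fin N) ℝ} (hT : IsSimple T) (a b : Fin N) :
    |T a b| ≤ 1 := by
  obtain ⟨c, hc1, hc0⟩ := hT b
  rcases eq_or_ne a c with rfl | h
  · simp [hc1]
  · simp [hc0 a h]

lemma mulVec_norm_le {T : Matrix (Fin N) (Fin N) ℝ} (hT : IsSimple T) (u : Fin N → ℝ) :
    ‖T.mulVec u‖ ≤ N * ‖u‖ := by
  rw [pi_norm_le_iff_of_nonneg (by positivity)]
  intro a
  rw [Matrix.mulVec, dotProduct]
  calc ‖∑ b, T a b * u b‖ ≤ ∑ b, ‖T a b * u b‖ := norm_sum_le _ _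
    _ ≤ ∑ _b : Fin N, 1 * ‖u‖ := by
        refine Finset.sum_le_sum fun b _ => ?_
        rw [norm_mul]
        exact mul_le_mul (simple_abs_le hT a b) (norm_le_pi_norm u b) (norm_nonneg _) zero_le_one
    _ = N * ‖u‖ := by simp

lemma zero_mem_opSet (U : Submodule ℝ (Fin N → ℝ)) (T : Matrix (Fin N) (Fin N) ℝ) :
    (0:ℝ) ∈ {c : ℝ | ∃ u ∈ U, ‖u‖ ≤ 1 ∧ c = ‖T.mulVec u‖} :=
  ⟨0, U.zero_mem, by simp, by simp [Matrix.mulVec_zero]⟩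

lemma opSet_bddAbove {T : Matrix (Fin N) (Fin N) ℝ} (hT : IsSimple T)
    (U : Submodule ℝ (Fin N → ℝ)) :
    BddAbove {c : ℝ | ∃ u ∈ U, ‖u‖ ≤ 1 ∧ c = ‖T.mulVec u‖} := by
  refine ⟨N, fun c hc => ?_⟩
  obtain ⟨u, -, hu1, rfl⟩ := hc
  calc ‖T.mulVec u‖ ≤ N * ‖u‖ := mulVec_norm_le hT u
    _ ≤ N * 1 := by nlinarith [norm_nonneg u]
    _ = N := mul_one _

lemma opNormOn_nonneg {T : Matrix (Fin N) (Fin N) ℝ} (hT : IsSimple T)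
    (U : Submodule ℝ (Fin N → ℝ)) : 0 ≤ opNormOn U T :=
  le_csSup (opSet_bddAbove hT U) (zero_mem_opSet U T)

lemma opNormOn_le {T : Matrix (Fin N) (Fin N) ℝ} (hT : IsSimple T)
    (U : Submodule ℝ (Fin N → ℝ)) : opNormOn U T ≤ N := by
  refine csSup_le ⟨0, zero_mem_opSet U T⟩ fun c hc => ?_
  obtain ⟨u, -, hu1, rfl⟩ := hc
  calc ‖T.mulVec u‖ ≤ N * ‖u‖ := mulVec_norm_le hT u
    _ ≤ N * 1 := by nlinarith [norm_nonneg u]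
    _ = N := mul_one _

lemma rows_zero_of_onesRow {T : Matrix (Fin N) (Fin N) ℝ} (hT : IsSimple T)
    {a : Fin N} (ha : ∀ b, T a b = 1) : ∀ a' b, a' ≠ a → T a' b = 0 := by
  intro a' b hne
  obtain ⟨c, hc1, hc0⟩ := hT b
  have : a = c := by
    by_contra hac
    exact one_ne_zero (ha b ▸ hc0 a hac)
  exact hc0 a' (this ▸ hne)

lemma opNormOn_eq_zero {T : Matrix (Fin N) (Fin N) ℝ} (hT : IsSimple T)
    (h : hasOnesRow T) : opNormOn (Wsub (Fin N)) T = 0 := by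
  obtain ⟨a, ha⟩ := h
  have hzero : ∀ u ∈ Wsub (Fin N), T.mulVec u = 0 := by
    intro u hu
    funext a'
    rcases eq_or_ne a' a with rfl | hne
    · simp only [Matrix.mulVec, dotProduct, ha, one_mul, Pi.zero_apply]
      exact mem_Wsub.mp hu
    · simp [Matrix.mulVec, dotProduct, rows_zero_of_onesRow hT ha a' _ hne]
  have : {c : ℝ | ∃ u ∈ Wsub (Fin N), ‖u‖ ≤ 1 ∧ c = ‖T.mulVec u‖} = {0} := by
    ext c
    constructor
    · rintro ⟨u, hu, -, rfl⟩
      simp [hzero u hu]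
    · rintro rfl
      exact zero_mem_opSet _ T
  rw [opNormOn, this, csSup_singleton]

lemma one_le_opNormOn (hN : 0 < N) {T : Matrix (Fin N) (Fin N) ℝ} (hT : IsSimple T)
    (h : ¬ hasOnesRow T) : 1 ≤ opNormOn (Wsub (Fin N)) T := by
  have : ∃ b b' : Fin N, (hT b).choose ≠ (hT b').choose := by
    by_contra hcon
    push_neg at hcon
    obtain ⟨b0⟩ : Nonempty (Fin N) := ⟨⟨0, hN⟩⟩
    exact h ⟨(hT b0).choose, fun b => hcon b b0 ▸ (hT b).choose_spec.1⟩
  obtain ⟨b, b', hf⟩ := this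
  have hbb' : b ≠ b' := fun e => hf (e ▸ rfl)
  set u : Fin N → ℝ := Pi.single b 1 - Pi.single b' 1 with hu
  have humem : u ∈ Wsub (Fin N) := by
    rw [mem_Wsub]
    simp [hu, Finset.sum_sub_distrib]
  have hun : ‖u‖ ≤ 1 := by
    rw [pi_norm_le_iff_of_nonneg zero_le_one]
    intro i
    have hui : u i = (if i = b then (1:ℝ) else 0) - (if i = b' then 1 else 0) := by
      simp [hu, Pi.single_apply]
    rw [Real.norm_eq_abs, hui]
    split_ifs <;> norm_num
  have hcomp : T.mulVec u ((hT b).choose) = 1 := by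
    have : T.mulVec u ((hT b).choose) = T (hT b).choose b - T (hT b).choose b' := by
      simp [hu, Matrix.mulVec_sub, Matrix.mulVec_single]
    rw [this, (hT b).choose_spec.1, (hT b').choose_spec.2 _ hf, sub_zero]
  have h1 : (1:ℝ) ≤ ‖T.mulVec u‖ := by
    calc (1:ℝ) = ‖T.mulVec u ((hT b).choose)‖ := by simp [hcomp]
      _ ≤ ‖T.mulVec u‖ := norm_le_pi_norm _ _
  calc (1:ℝ) ≤ ‖T.mulVec u‖ := h1
    _ ≤ opNormOn (Wsub (Fin N)) T :=
      le_csSup (opSet_bddAbove hT _) ⟨u, humem, hun, rfl⟩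

end D

lemma ncard_eq_filter {α : Type*} [Fintype α] (p : α → Prop) [DecidablePred p] :
    Set.ncard {x | p x} = (Finset.univ.filter p).card := by
  rw [← Nat.card_coe_set_eq, Nat.card_eq_fintype_card]
  exact Fintype.card_subtype p

section E
variable {N mm : ℕ} (B : Fin mm → Matrix (Fin N) (Fin N) ℝ)

lemma prodW_split {a b : ℕ} (w : Fin (a + b) → Fin mm) :
    (List.ofFn fun i => B (w i)).prod =
      (List.ofFn fun i : Fin a => B (w (Fin.castAdd b i))).prod *
      (List.ofFn fun i : Fin b => B (w (Fin.natAdd a i))).prod := by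
  rw [List.ofFn_add, List.prod_append]; rfl

lemma prodW_simple (hN : 0 < N) (hB : ∀ i, IsSimple (B i)) {k : ℕ} (w : Fin k → Fin mm) :
    IsSimple (List.ofFn fun i => B (w i)).prod := by
  refine isSimple_listProd hN _ fun T hT => ?_
  obtain ⟨i, rfl⟩ := List.mem_ofFn.mp hT
  exact hB _

lemma card_submul (hN : 0 < N) (hB : ∀ i, IsSimple (B i)) (a b : ℕ) :
    Set.ncard {w : Fin (a+b) → Fin mm | ¬ hasOnesRow ((List.ofFn fun i => B (w i)).prod)} ≤
    Set.ncard {w : Fin a → Fin mm | ¬ hasOnesRow ((List.ofFn fun i => B (w i)).prod)} *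
    Set.ncard {w : Fin b → Fin mm | ¬ hasOnesRow ((List.ofFn fun i => B (w i)).prod)} := by
  rw [← Nat.card_coe_set_eq, ← Nat.card_coe_set_eq, ← Nat.card_coe_set_eq,
    ← Nat.card_prod]
  refine Nat.card_le_card_of_injective (fun w => ⟨⟨fun i => w.1 (Fin.castAdd b i), ?_⟩,
    ⟨fun i => w.1 (Fin.natAdd a i), ?_⟩⟩) ?_
  · intro hres
    exact w.2 (prodW_split B w.1 ▸
      hasOnesRow_mul_left (prodW_simple B hN hB _) hres)
  · intro hres
    exact w.2 (prodW_split B w.1 ▸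
      hasOnesRow_mul_right (prodW_simple B hN hB _) (prodW_simple B hN hB _) hres)
  · rintro ⟨w, hw⟩ ⟨w', hw'⟩ h
    simp only [Prod.mk.injEq, Subtype.mk.injEq] at h
    refine Subtype.ext (funext fun i => ?_)
    refine Fin.addCases (fun j => ?_) (fun j => ?_) i
    · exact congr_fun h.1 j
    · exact congr_fun h.2 j

end E

section F
variable {N mm : ℕ} (B : Fin mm → Matrix (Fin N) (Fin N) ℝ)

noncomputable def cntB (k : ℕ) : ℕ :=
  Set.ncard {w : Fin k → Fin mm | ¬ hasOnesRow ((List.ofFn fun i => B (w i)).prod)}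

noncomputable def sumB (k : ℕ) : ℝ :=
  ∑ w : Fin k → Fin mm,
    opNormOn (Wsub (Fin N)) ((List.ofFn fun i => B (w i)).prod) ^ (2:ℝ)

lemma cnt_le_pow (k : ℕ) : cntB B k ≤ mm ^ k := by
  rw [cntB]
  calc Set.ncard {w : Fin k → Fin mm | ¬ hasOnesRow ((List.ofFn fun i => B (w i)).prod)}
      ≤ Set.ncard (Set.univ : Set (Fin k → Fin mm)) :=
        Set.ncard_le_ncard (Set.subset_univ _) (Set.toFinite _)
    _ = mm ^ k := by
        rw [Set.ncard_univ, Nat.card_eq_fintype_card, Fintype.card_fun]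
        simp

lemma cnt_filter (k : ℕ) [DecidablePred fun w : Fin k → Fin mm =>
      ¬ hasOnesRow ((List.ofFn fun i => B (w i)).prod)] :
    cntB B k = (Finset.univ.filter fun w : Fin k → Fin mm =>
      ¬ hasOnesRow ((List.ofFn fun i => B (w i)).prod)).card :=
  ncard_eq_filter _

lemma sum_lower (hN : 0 < N) (hB : ∀ i, IsSimple (B i)) (k : ℕ) :
    (cntB B k : ℝ) ≤ sumB B k := by
  classical
  have h1 : (cntB B k : ℝ) = ∑ w : Fin k → Fin mm,
      (if ¬ hasOnesRow ((List.ofFn fun i => B (w i)).prod) then (1:ℝ) else 0) := by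
    rw [Finset.sum_boole, cnt_filter]
  rw [h1]
  refine Finset.sum_le_sum fun w _ => ?_
  by_cases hw : hasOnesRow ((List.ofFn fun i => B (w i)).prod)
  · rw [if_neg (not_not_intro hw), opNormOn_eq_zero (prodW_simple B hN hB w) hw,
      Real.zero_rpow two_ne_zero]
  · rw [if_pos hw]
    have h1le := one_le_opNormOn hN (prodW_simple B hN hB w) hw
    calc (1:ℝ) = 1 ^ (2:ℝ) := by rw [Real.one_rpow]
      _ ≤ _ := Real.rpow_le_rpow zero_le_one h1le (by norm_num)

lemma sum_upper (hN : 0 < N) (hB : ∀ i, IsSimple (B i)) (k : ℕ) :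
    sumB B k ≤ (N:ℝ)^2 * cntB B k := by
  classical
  have h1 : ((N:ℝ))^2 * (cntB B k : ℝ) = ∑ w : Fin k → Fin mm,
      (if ¬ hasOnesRow ((List.ofFn fun i => B (w i)).prod) then ((N:ℝ))^2 else 0) := by
    rw [show (fun w : Fin k → Fin mm =>
        (if ¬ hasOnesRow ((List.ofFn fun i => B (w i)).prod) then ((N:ℝ))^2 else 0)) =
        (fun w => ((N:ℝ))^2 * (if ¬ hasOnesRow ((List.ofFn fun i => B (w i)).prod)
          then (1:ℝ) else 0)) from funext fun w => by split_ifs <;> ring]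
    rw [← Finset.mul_sum, Finset.sum_boole, cnt_filter]
  rw [h1]
  refine Finset.sum_le_sum fun w _ => ?_
  by_cases hw : hasOnesRow ((List.ofFn fun i => B (w i)).prod)
  · rw [if_neg (not_not_intro hw), opNormOn_eq_zero (prodW_simple B hN hB w) hw,
      Real.zero_rpow two_ne_zero]
  · rw [if_pos hw]
    have hle := opNormOn_le (prodW_simple B hN hB w) (Wsub (Fin N))
    have hnn := opNormOn_nonneg (prodW_simple B hN hB w) (Wsub (Fin N))
    calc opNormOn (Wsub (Fin N)) ((List.ofFn fun i => B (w i)).prod) ^ (2:ℝ)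
        ≤ (N:ℝ) ^ (2:ℝ) := Real.rpow_le_rpow hnn hle (by norm_num)
      _ = (N:ℝ)^2 := by rw [Real.rpow_two]

end F

theorem automaton_sync_parameter {N m : ℕ} (hN : 0 < N) (hm : 0 < m)
    (B : Fin m → Matrix (Fin N) (Fin N) ℝ) (hB : ∀ i, IsSimple (B i)) :
    Filter.Tendsto (fun k : ℕ =>
        ((Set.ncard {w : Fin k → Fin m |
            ¬ hasOnesRow ((List.ofFn fun i => B (w i)).prod)} : ℝ) / (m : ℝ) ^ k)
          ^ ((1 : ℝ) / k))
      Filter.atTop (nhds ((lpRadiusOn (Wsub (Fin N)) B 2) ^ 2)) ∧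
    ((∃ k : ℕ, ∃ w : Fin k → Fin m, hasOnesRow ((List.ofFn fun i => B (w i)).prod)) ↔
      (lpRadiusOn (Wsub (Fin N)) B 2) ^ 2 < 1) := by
  classical
  have hmpos : (0:ℝ) < m := by exact_mod_cast hm
  have hFfun : lpRadiusOn (Wsub (Fin N)) B 2 =
      limUnder atTop (fun k : ℕ => (((m:ℝ)^k)⁻¹ * sumB B k) ^ (1/(2 * (k:ℝ)))) := by
    rw [lpRadiusOn]
    simp only [Fintype.card_fin]
    rfl
  have hGshow : (fun k : ℕ =>
        ((Set.ncard {w : Fin k → Fin m |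
            ¬ hasOnesRow ((List.ofFn fun i => B (w i)).prod)} : ℝ) / (m : ℝ) ^ k)
          ^ ((1 : ℝ) / k)) =
      fun k : ℕ => ((cntB B k : ℝ) / (m:ℝ)^k) ^ ((1:ℝ)/k) := rfl
  by_cases hA : ∃ K, cntB B K = 0
  · -- Case A : eventually everything is a reset word
    obtain ⟨K, hK⟩ := hA
    have hzero : ∀ k, K ≤ k → cntB B k = 0 := by
      intro k hk
      obtain ⟨j, rfl⟩ := Nat.exists_eq_add_of_le hk
      have h' : cntB B (K + j) ≤ cntB B K * cntB B j := card_submul B hN hB K j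
      rw [hK, zero_mul] at h'
      exact Nat.le_zero.mp h'
    have hreset : ∀ k, K ≤ k → ∀ w : Fin k → Fin m,
        hasOnesRow ((List.ofFn fun i => B (w i)).prod) := by
      intro k hk w
      by_contra hw
      have hempty : {w : Fin k → Fin m |
          ¬ hasOnesRow ((List.ofFn fun i => B (w i)).prod)} = ∅ :=
        (Set.ncard_eq_zero (Set.toFinite _)).mp (hzero k hk)
      exact absurd (hempty ▸ hw : w ∈ (∅ : Set (Fin k → Fin m))) (Set.notMem_empty w)
    have hFlim : Tendsto (fun k : ℕ => (((m:ℝ)^k)⁻¹ * sumB B k) ^ (1/(2 * (k:ℝ))))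
        atTop (𝓝 0) := by
      refine tendsto_const_nhds.congr' ?_
      filter_upwards [eventually_ge_atTop (max K 1)] with k hk
      have hk1 : 1 ≤ k := le_trans (le_max_right K 1) hk
      have hsum0 : sumB B k = 0 := by
        refine Finset.sum_eq_zero fun w _ => ?_
        rw [opNormOn_eq_zero (prodW_simple B hN hB w)
          (hreset k (le_trans (le_max_left K 1) hk) w), Real.zero_rpow two_ne_zero]
      rw [hsum0, mul_zero, Real.zero_rpow]
      have : (0:ℝ) < 2 * (k:ℝ) := by positivity
      positivity
    have hlp : lpRadiusOn (Wsub (Fin N)) B 2 = 0 := by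
      rw [hFfun]; exact hFlim.limUnder_eq
    have h02 : (0:ℝ)^2 = 0 := by norm_num
    constructor
    · rw [hGshow, hlp, h02]
      refine tendsto_const_nhds.congr' ?_
      filter_upwards [eventually_ge_atTop (max K 1)] with k hk
      have hk1 : 1 ≤ k := le_trans (le_max_right K 1) hk
      rw [hzero k (le_trans (le_max_left K 1) hk)]
      rw [Nat.cast_zero, zero_div, Real.zero_rpow]
      have : (0:ℝ) < k := by exact_mod_cast hk1
      positivity
    · rw [hlp]
      exact iff_of_true ⟨K, fun _ => ⟨0, hm⟩, hreset K le_rfl _⟩ (by norm_num)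
  · -- Case B : non-reset words of every length exist
    push_neg at hA
    set u : ℕ → ℝ := fun k => Real.log ((cntB B k : ℝ) / (m:ℝ)^k) with hu_def
    have hcpos : ∀ k, 0 < (cntB B k : ℝ) := by
      intro k
      exact_mod_cast Nat.pos_of_ne_zero (hA k)
    have hPpos : ∀ k, 0 < (cntB B k : ℝ) / (m:ℝ)^k := fun k =>
      div_pos (hcpos k) (by positivity)
    have hsubadd : Subadditive u := by
      intro a b
      have hcc : (cntB B (a+b) : ℝ) ≤ (cntB B a : ℝ) * (cntB B b : ℝ) := by
        exact_mod_cast card_submul B hN hB a b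
      have hle : (cntB B (a+b):ℝ)/(m:ℝ)^(a+b) ≤
          ((cntB B a:ℝ)/(m:ℝ)^a) * ((cntB B b:ℝ)/(m:ℝ)^b) := by
        rw [div_mul_div_comm, ← pow_add]
        exact (div_le_div_iff_of_pos_right (by positivity)).mpr hcc
      calc u (a+b) ≤ Real.log (((cntB B a:ℝ)/(m:ℝ)^a) * ((cntB B b:ℝ)/(m:ℝ)^b)) :=
            Real.log_le_log (hPpos _) hle
        _ = u a + u b := Real.log_mul (ne_of_gt (hPpos a)) (ne_of_gt (hPpos b))
    have hbdd : BddBelow (Set.range fun n : ℕ => u n / n) := by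
      refine ⟨-Real.log m, ?_⟩
      rintro x ⟨n, rfl⟩
      rcases Nat.eq_zero_or_pos n with rfl | hn
      · simp only [Nat.cast_zero, div_zero]
        simpa using Real.log_nonneg (by exact_mod_cast hm)
      · have hnR : (0:ℝ) < n := by exact_mod_cast hn
        have h1 : ((m:ℝ)^n)⁻¹ ≤ (cntB B n : ℝ) / (m:ℝ)^n := by
          rw [inv_eq_one_div]
          exact (div_le_div_iff_of_pos_right (by positivity)).mpr (by exact_mod_cast hcpos n)
        have h2 : -((n:ℝ) * Real.log m) ≤ u n := by
          calc -((n:ℝ) * Real.log m) = Real.log ((m:ℝ)^n)⁻¹ := by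
                rw [Real.log_inv, Real.log_pow]
            _ ≤ u n := Real.log_le_log (by positivity) h1
        calc -Real.log m = -((n:ℝ) * Real.log m) / n := by
              field_simp
          _ ≤ u n / n := (div_le_div_iff_of_pos_right hnR).mpr h2
    have hlim := hsubadd.tendsto_lim hbdd
    set L := hsubadd.lim with hL_def
    -- bounds on the normalized sums
    have hS_lb : ∀ k, (cntB B k:ℝ)/(m:ℝ)^k ≤ ((m:ℝ)^k)⁻¹ * sumB B k := by
      intro k
      rw [div_eq_inv_mul]
      exact mul_le_mul_of_nonneg_left (sum_lower B hN hB k) (by positivity)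
    have hS_ub : ∀ k, ((m:ℝ)^k)⁻¹ * sumB B k ≤ (N:ℝ)^2 * ((cntB B k:ℝ)/(m:ℝ)^k) := by
      intro k
      calc ((m:ℝ)^k)⁻¹ * sumB B k ≤ ((m:ℝ)^k)⁻¹ * ((N:ℝ)^2 * (cntB B k:ℝ)) :=
            mul_le_mul_of_nonneg_left (sum_upper B hN hB k) (by positivity)
        _ = (N:ℝ)^2 * ((cntB B k:ℝ)/(m:ℝ)^k) := by
            rw [div_eq_inv_mul]; ring
    have hSpos : ∀ k, 0 < ((m:ℝ)^k)⁻¹ * sumB B k := fun k =>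
      lt_of_lt_of_le (hPpos k) (hS_lb k)
    have hN2pos : (0:ℝ) < (N:ℝ)^2 := by
      have : (0:ℝ) < N := by exact_mod_cast hN
      positivity
    -- squeeze for the log of the normalized sums
    have hlow : Tendsto (fun k : ℕ => u k / k / 2) atTop (𝓝 (L/2)) := hlim.div_const 2
    have hupp : Tendsto (fun k : ℕ => (u k / k + Real.log ((N:ℝ)^2) / k) / 2)
        atTop (𝓝 (L/2)) := by
      have h0 : Tendsto (fun k : ℕ => Real.log ((N:ℝ)^2) / k) atTop (𝓝 0) :=
        tendsto_const_div_atTop_nhds_zero_nat _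
      simpa using (hlim.add h0).div_const 2
    have hg : Tendsto (fun k : ℕ => Real.log (((m:ℝ)^k)⁻¹ * sumB B k) / (2*(k:ℝ)))
        atTop (𝓝 (L/2)) := by
      refine tendsto_of_tendsto_of_tendsto_of_le_of_le' hlow hupp ?_ ?_
      · filter_upwards [eventually_ge_atTop 1] with k hk
        have hkR : (0:ℝ) < k := by exact_mod_cast hk
        have hlog : u k ≤ Real.log (((m:ℝ)^k)⁻¹ * sumB B k) :=
          Real.log_le_log (hPpos k) (hS_lb k)
        rw [div_div, mul_comm (k:ℝ) 2]
        exact (div_le_div_iff_of_pos_right (by positivity)).mpr hlog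
      · filter_upwards [eventually_ge_atTop 1] with k hk
        have hkR : (0:ℝ) < k := by exact_mod_cast hk
        have hlog : Real.log (((m:ℝ)^k)⁻¹ * sumB B k) ≤ u k + Real.log ((N:ℝ)^2) := by
          have h := Real.log_le_log (hSpos k) (hS_ub k)
          rwa [Real.log_mul (ne_of_gt hN2pos) (ne_of_gt (hPpos k)), add_comm] at h
        have hrw : (u k / ↑k + Real.log ((N:ℝ)^2) / ↑k) / 2 =
            (u k + Real.log ((N:ℝ)^2)) / (2*(k:ℝ)) := by
          rw [← add_div, div_div, mul_comm (k:ℝ) 2]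
        rw [hrw]
        exact (div_le_div_iff_of_pos_right (by positivity)).mpr hlog
    have hFlim : Tendsto (fun k : ℕ => (((m:ℝ)^k)⁻¹ * sumB B k) ^ (1/(2 * (k:ℝ))))
        atTop (𝓝 (Real.exp (L/2))) := by
      have h := (Real.continuous_exp.tendsto (L/2)).comp hg
      refine h.congr fun k => ?_
      rw [Real.rpow_def_of_pos (hSpos k), mul_one_div]
      rfl
    have hlp : lpRadiusOn (Wsub (Fin N)) B 2 = Real.exp (L/2) := by
      rw [hFfun]; exact hFlim.limUnder_eq
    have hsq : (Real.exp (L/2))^2 = Real.exp L := by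
      rw [sq, ← Real.exp_add, add_halves]
    rw [hlp, hsq]
    constructor
    · -- the main limit
      rw [hGshow]
      have h := (Real.continuous_exp.tendsto L).comp hlim
      refine h.congr fun k => ?_
      rw [Real.rpow_def_of_pos (hPpos k), mul_one_div]
      rfl
    · constructor
      · rintro ⟨k, w, hw⟩
        have hk0 : k ≠ 0 := by
          rintro rfl
          obtain ⟨w', hw'⟩ := Set.nonempty_of_ncard_ne_zero (hA 0)
          have : w' = w := funext fun i => i.elim0
          rw [this] at hw'
          exact hw' hw
        have hlt : cntB B k < m ^ k := by
          have hsubset : {w' : Fin k → Fin m |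
              ¬ hasOnesRow ((List.ofFn fun i => B (w' i)).prod)} ⊆
              (Set.univ : Set (Fin k → Fin m)) \ {w} := by
            intro w' hw'
            refine ⟨trivial, fun he => ?_⟩
            rw [Set.mem_singleton_iff] at he
            exact hw' (he ▸ hw)
          have huniv : (Set.univ : Set (Fin k → Fin m)).ncard = m ^ k := by
            rw [Set.ncard_univ, Nat.card_eq_fintype_card, Fintype.card_fun]
            simp
          calc cntB B k ≤ ((Set.univ : Set (Fin k → Fin m)) \ {w}).ncard :=
                Set.ncard_le_ncard hsubset (Set.toFinite _)
            _ = m ^ k - 1 := by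
                rw [Set.ncard_diff_singleton_of_mem (Set.mem_univ w), huniv]
            _ < m ^ k := Nat.sub_lt (pow_pos hm k) one_pos
        have hP1 : (cntB B k : ℝ)/(m:ℝ)^k < 1 :=
          (div_lt_one (by positivity)).mpr (by exact_mod_cast hlt)
        have hu : u k < 0 := Real.log_neg (hPpos k) hP1
        have hL1 : L ≤ u k / k := hsubadd.lim_le_div hbdd hk0
        have hkR : (0:ℝ) < k := by
          exact_mod_cast Nat.pos_of_ne_zero hk0
        have hL0 : L < 0 := lt_of_le_of_lt hL1 (div_neg_of_neg_of_pos hu hkR)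
        calc Real.exp L < Real.exp 0 := Real.exp_lt_exp.mpr hL0
          _ = 1 := Real.exp_zero
      · intro hlt
        by_contra hno
        push_neg at hno
        have hall : ∀ k, cntB B k = m ^ k := by
          intro k
          have huniv : {w : Fin k → Fin m |
              ¬ hasOnesRow ((List.ofFn fun i => B (w i)).prod)} = Set.univ :=
            Set.eq_univ_of_forall fun w => hno k w
          rw [cntB, huniv, Set.ncard_univ, Nat.card_eq_fintype_card, Fintype.card_fun]
          simp
        have hu0 : ∀ k, u k = 0 := by
          intro k
          rw [hu_def]
          simp only [hall k]
          rw [Nat.cast_pow, div_self (by positivity), Real.log_one]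
        have htend0 : Tendsto (fun n : ℕ => u n / n) atTop (𝓝 0) := by
          simpa [hu0] using (tendsto_const_nhds : Tendsto (fun _ : ℕ => (0:ℝ)) atTop (𝓝 0))
        have hL0 : L = 0 := tendsto_nhds_unique hlim htend0
        rw [hL0, Real.exp_zero] at hlt
        exact lt_irrefl 1 hlt
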